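/- Let H be a Bott ring presented by a nonzero matrix A ∈ 𝔅(n). Then a Klein pair exists in H; that is, there exist x, x̄ ∈ H^1, both nonzero, with x ≠ x̄, x·x̄ = 0, and (x + x̄)^2 = 0. -/

import Mathlib

open MvPolynomial

/-- Strictly upper triangular matrix (zero diagonal, zero below diagonal);
membership in `𝔅(n)`. -/
def IsUpperTri {n : ℕ} (A : Matrix (Fin n) (Fin n) (ZMod 2)) : Prop :=
  ∀ i j : Fin n, j ≤ i → A i j = 0

/-- The defining ideal `(x_j^2 - x_j Σ_i A^i_j x_i)`. -/
noncomputable def bottIdeal {n : ℕ} (A : Matrix (Fin n) (Fin n) (ZMod 2)) :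
    Ideal (MvPolynomial (Fin n) (ZMod 2)) :=
  Ideal.span (Set.range fun j : Fin n => X j ^ 2 - X j * ∑ i : Fin n, C (A i j) * X i)

/-- The Bott ring `H = (Z/2)[x_1,...,x_n]/(x_j^2 = x_j Σ_i A^i_j x_i)` presented by `A`. -/
abbrev BottRing {n : ℕ} (A : Matrix (Fin n) (Fin n) (ZMod 2)) : Type :=
  MvPolynomial (Fin n) (ZMod 2) ⧸ bottIdeal A

/-- The canonical degree-one generators `x_j`. -/
noncomputable def bx {n : ℕ} (A : Matrix (Fin n) (Fin n) (ZMod 2)) (j : Fin n) : BottRing A :=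
  Ideal.Quotient.mk (bottIdeal A) (X j)

/-- The degree-one part `H^1` of the Bott ring (the span of `x_1,...,x_n`). -/
noncomputable def deg1 {n : ℕ} (A : Matrix (Fin n) (Fin n) (ZMod 2)) :
    Submodule (ZMod 2) (BottRing A) :=
  Submodule.span (ZMod 2) (Set.range (bx A))

/-- The eigen-elements `α_j = Σ_i A^i_j x_i`. -/
noncomputable def alphaEl {n : ℕ} (A : Matrix (Fin n) (Fin n) (ZMod 2)) (j : Fin n) :
    BottRing A :=
  ∑ i : Fin n, A i j • bx A i

-- auxiliary
noncomputable def psiF {n : ℕ} (k : Fin n) : Fin n → DualNumber (ZMod 2) :=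
  fun i => TrivSqZeroExt.inr (if i = k then 1 else 0)

lemma psiF_mul {n : ℕ} (k i j : Fin n) : psiF k i * psiF k j = 0 :=
  TrivSqZeroExt.inr_mul_inr _ _ _

set_option synthInstance.maxHeartbeats 1000000 in
set_option maxHeartbeats 1000000 in
lemma psi_ker {n : ℕ} (A : Matrix (Fin n) (Fin n) (ZMod 2)) (k : Fin n) :
    ∀ a ∈ bottIdeal A, aeval (psiF k) a = 0 := by
  intro a ha
  have h : bottIdeal A ≤ RingHom.ker (aeval (psiF k) :
      MvPolynomial (Fin n) (ZMod 2) →ₐ[ZMod 2] DualNumber (ZMod 2)).toRingHom := by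
    rw [bottIdeal, Ideal.span_le]
    rintro p ⟨j, rfl⟩
    simp only [SetLike.mem_coe, RingHom.mem_ker, AlgHom.toRingHom_eq_coe, RingHom.coe_coe,
      map_sub, map_pow, map_mul, map_sum, aeval_X, aeval_C]
    rw [pow_two, psiF_mul, Finset.mul_sum, zero_sub, neg_eq_zero]
    refine Finset.sum_eq_zero fun i _ => ?_
    rw [mul_left_comm, psiF_mul, mul_zero]
  exact h ha

noncomputable def psi {n : ℕ} (A : Matrix (Fin n) (Fin n) (ZMod 2)) (k : Fin n) :
    BottRing A →ₐ[ZMod 2] DualNumber (ZMod 2) :=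
  Ideal.Quotient.liftₐ (bottIdeal A) (aeval (psiF k)) (psi_ker A k)

lemma psi_bx {n : ℕ} (A : Matrix (Fin n) (Fin n) (ZMod 2)) (k i : Fin n) :
    psi A k (bx A i) = TrivSqZeroExt.inr (if i = k then 1 else 0) := by
  change aeval (psiF k) (X i : MvPolynomial (Fin n) (ZMod 2)) = _
  rw [aeval_X]
  rfl

lemma psi_alpha {n : ℕ} (A : Matrix (Fin n) (Fin n) (ZMod 2)) (k j : Fin n) :
    psi A k (alphaEl A j) = TrivSqZeroExt.inr (A k j) := by
  rw [alphaEl, map_sum]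
  rw [Finset.sum_eq_single k]
  · rw [map_smul, psi_bx]
    simp only [if_pos rfl]
    ext
    · simp [TrivSqZeroExt.fst_smul]
    · simp [TrivSqZeroExt.snd_smul]
  · intro i _ hik
    rw [map_smul, psi_bx, if_neg hik]
    simp
  · simp

lemma bx_sq {n : ℕ} (A : Matrix (Fin n) (Fin n) (ZMod 2)) (j : Fin n) :
    bx A j ^ 2 = bx A j * alphaEl A j := by
  have h0 : (Ideal.Quotient.mk (bottIdeal A))
      (X j ^ 2 - X j * ∑ i : Fin n, C (A i j) * X i) = 0 :=
    Ideal.Quotient.eq_zero_iff_mem.mpr (Ideal.subset_span ⟨j, rfl⟩)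
  rw [map_sub, sub_eq_zero] at h0
  have h1 : alphaEl A j = (Ideal.Quotient.mk (bottIdeal A)) (∑ i : Fin n, C (A i j) * X i) := by
    rw [map_sum, alphaEl]
    refine Finset.sum_congr rfl fun i _ => ?_
    rw [← Ideal.Quotient.mkₐ_eq_mk (ZMod 2), ← smul_eq_C_mul, map_smul]
    simp [bx, Ideal.Quotient.mkₐ_eq_mk]
  rw [h1, bx, ← map_pow, h0, map_mul]

/-- If `A ∈ 𝔅(n)` is nonzero then a Klein pair exists in the Bott ring presented
by `A`: distinct nonzero `x, x̄ ∈ H^1` with `x·x̄ = 0` and `(x + x̄)² = 0`. -/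
theorem stmt11 {n : ℕ} (A : Matrix (Fin n) (Fin n) (ZMod 2)) (hA : IsUpperTri A)
    (hA0 : A ≠ 0) :
    ∃ x xbar : BottRing A, x ∈ deg1 A ∧ xbar ∈ deg1 A ∧ x ≠ 0 ∧ xbar ≠ 0 ∧
      x ≠ xbar ∧ x * xbar = 0 ∧ (x + xbar) ^ 2 = 0 := by
  -- find a nonzero entry
  have hex : ∃ i j : Fin n, A i j ≠ 0 := by
    by_contra h
    push_neg at h
    exact hA0 (by ext i j; simp [h])
  obtain ⟨i1, j1, hij1⟩ := hex
  -- the Bott ring is nontrivial and has characteristic 2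
  haveI : Nontrivial (BottRing A) := (psi A j1).toRingHom.domain_nontrivial
  haveI : CharP (BottRing A) 2 :=
    charP_of_injective_ringHom (algebraMap (ZMod 2) (BottRing A)).injective 2
  -- minimal column with a nonzero entry
  obtain ⟨j, hjmem, hjmin⟩ := Finset.exists_min_image
    (Finset.univ.filter fun j : Fin n => ∃ i, A i j ≠ 0) id
    ⟨j1, by simp; exact ⟨i1, hij1⟩⟩
  simp only [Finset.mem_filter, Finset.mem_univ, true_and] at hjmem
  obtain ⟨i0, hi0⟩ := hjmem
  have hmin : ∀ i : Fin n, i < j → ∀ k, A k i = 0 := by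
    intro i hi k
    by_contra hk
    have := hjmin i (by simp; exact ⟨k, hk⟩)
    simp only [id] at this
    exact absurd hi (not_lt.mpr this)
  -- column entries of zero columns square to zero
  have hsq0 : ∀ i : Fin n, i < j → bx A i ^ 2 = 0 := by
    intro i hi
    rw [bx_sq]
    have : alphaEl A i = 0 := by
      rw [alphaEl]
      refine Finset.sum_eq_zero fun k _ => ?_
      rw [hmin i hi k, zero_smul]
    rw [this, mul_zero]
  have hαsq : alphaEl A j ^ 2 = 0 := by
    rw [alphaEl, CharTwo.sum_sq]
    refine Finset.sum_eq_zero fun i _ => ?_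
    rw [smul_pow]
    by_cases h : A i j = 0
    · rw [h]; simp
    · have hij : i < j := by
        by_contra hle
        exact h (hA i j (not_lt.mp hle))
      rw [hsq0 i hij, smul_zero]
  -- nonzero facts via psi
  have hone : (TrivSqZeroExt.inr 1 : DualNumber (ZMod 2)) ≠ 0 := by
    intro h
    have := congrArg TrivSqZeroExt.snd h
    simp at this
  have hone' : ∀ a : ZMod 2, a ≠ 0 → a = 1 := by decide
  have hxne : bx A j ≠ 0 := by
    intro h
    apply hone
    have := congrArg (psi A j) h
    rw [psi_bx, map_zero, if_pos rfl] at this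
    exact this
  have hAjj : A j j = 0 := hA j j le_rfl
  have hαne : alphaEl A j ≠ 0 := by
    intro h
    apply hone
    have := congrArg (psi A i0) h
    rw [psi_alpha, map_zero, hone' _ hi0] at this
    exact this
  refine ⟨bx A j, bx A j + alphaEl A j, ?_, ?_, hxne, ?_, ?_, ?_, ?_⟩
  · exact Submodule.subset_span ⟨j, rfl⟩
  · exact Submodule.add_mem _ (Submodule.subset_span ⟨j, rfl⟩)
      (Submodule.sum_mem _ fun i _ => Submodule.smul_mem _ _ (Submodule.subset_span ⟨i, rfl⟩))
  · -- xbar ≠ 0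
    intro h
    apply hone
    have := congrArg (psi A j) h
    rw [map_add, psi_bx, psi_alpha, hAjj, if_pos rfl,
      TrivSqZeroExt.inr_zero, add_zero] at this
    exact this
  · -- x ≠ xbar
    intro h
    apply hαne
    rwa [left_eq_add] at h
  · -- x * xbar = 0
    rw [mul_add, ← pow_two, bx_sq, CharTwo.add_self_eq_zero]
  · -- (x + xbar)^2 = 0
    have : bx A j + (bx A j + alphaEl A j) = alphaEl A j := by
      rw [← add_assoc, CharTwo.add_self_eq_zero, zero_add]
    rw [this, hαsq]
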